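/- Let τ > 0 and Z ≥ 0. Then g̃_{τ,Z} is convex on the interval [0, ∞). -/

import Mathlib

/-- erf(x) = ∫₀ˣ exp(−s²/2) ds -/
noncomputable def erf (x : ℝ) : ℝ := ∫ s in (0:ℝ)..x, Real.exp (-s^2/2)

/-- g̃_{τ,Z}(x) = √(τ/8)·Z·erf(x/√(8τ))·exp(x²/(16τ)) -/
noncomputable def gtilde (τ Z x : ℝ) : ℝ :=
  Real.sqrt (τ/8) * Z * erf (x / Real.sqrt (8*τ)) * Real.exp (x^2/(16*τ))

lemma erf_hasDerivAt (x : ℝ) : HasDerivAt erf (Real.exp (-x^2/2)) x := by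
  have hc : Continuous fun s : ℝ => Real.exp (-s^2/2) := by continuity
  exact intervalIntegral.integral_hasDerivAt_right (hc.intervalIntegrable 0 x)
    (hc.stronglyMeasurableAtFilter _ _) hc.continuousAt

lemma erf_nonneg {x : ℝ} (hx : 0 ≤ x) : 0 ≤ erf x := by
  apply intervalIntegral.integral_nonneg hx
  intro s _
  positivity

theorem stmt_2 (τ Z : ℝ) (hτ : 0 < τ) (hZ : 0 ≤ Z) :
    ConvexOn ℝ (Set.Ici (0:ℝ)) (gtilde τ Z) := by
  set b := Real.sqrt (8*τ) with hbdef
  have hb0 : 0 < b := Real.sqrt_pos.mpr (by linarith)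
  have hb2 : b^2 = 8*τ := Real.sq_sqrt (by linarith)
  set c := Real.sqrt (τ/8) * Z with hcdef
  have hc0 : 0 ≤ c := mul_nonneg (Real.sqrt_nonneg _) hZ
  set E : ℝ → ℝ := fun x => erf (x/b) * Real.exp (x^2/(16*τ)) with hEdef
  have hE : ∀ x : ℝ, HasDerivAt E (1/b + E x * (x/(8*τ))) x := by
    intro x
    have h1 : HasDerivAt (fun x : ℝ => erf (x/b)) (Real.exp (-(x/b)^2/2) * (1/b)) x := by
      exact (erf_hasDerivAt (x/b)).comp x ((hasDerivAt_id x).div_const b)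
    have h2 : HasDerivAt (fun x : ℝ => Real.exp (x^2/(16*τ)))
        (Real.exp (x^2/(16*τ)) * (x/(8*τ))) x := by
      have hin : HasDerivAt (fun x : ℝ => x^2/(16*τ)) (x/(8*τ)) x := by
        have := ((hasDerivAt_pow 2 x).div_const (16*τ))
        convert this using 1
        any_goals rfl
        field_simp
        ring
      exact hin.exp
    have := h1.mul h2
    convert this using 1
    any_goals rfl
    have hkey : Real.exp (-(x/b)^2/2) * Real.exp (x^2/(16*τ)) = 1 := by
      rw [← Real.exp_add, ← Real.exp_zero]
      congr 1
      rw [div_pow, hb2]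
      field_simp
      ring
    have : Real.exp (-(x/b)^2/2) * (1/b) * Real.exp (x^2/(16*τ)) = 1/b := by
      rw [mul_comm (Real.exp (-(x/b)^2/2)) (1/b), mul_assoc, hkey, mul_one]
    rw [this]
    simp only [hEdef]
    ring
  have hg : ∀ x : ℝ, HasDerivAt (gtilde τ Z) (c * (1/b + E x * (x/(8*τ)))) x := by
    intro x
    have : HasDerivAt (fun x => c * E x) (c * (1/b + E x * (x/(8*τ)))) x :=
      (hE x).const_mul c
    convert this using 2 with y
    simp only [gtilde, hEdef, hcdef, hbdef]
    ring
  have hg' : ∀ x : ℝ, HasDerivAt (fun x => c * (1/b + E x * (x/(8*τ))))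
      (c * ((1/b + E x * (x/(8*τ))) * (x/(8*τ)) + E x * (1/(8*τ)))) x := by
    intro x
    have hid : HasDerivAt (fun x : ℝ => x/(8*τ)) (1/(8*τ)) x :=
      (hasDerivAt_id x).div_const (8*τ)
    exact (((hE x).mul hid).const_add (1/b)).const_mul c
  have hderiv : deriv (gtilde τ Z) = fun x => c * (1/b + E x * (x/(8*τ))) :=
    funext fun x => (hg x).deriv
  apply convexOn_of_deriv2_nonneg (convex_Ici 0)
  · exact fun x _ => (hg x).continuousAt.continuousWithinAt
  · exact fun x _ => ((hg x).differentiableAt).differentiableWithinAt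
  · intro x _
    rw [hderiv]
    exact ((hg' x).differentiableAt).differentiableWithinAt
  · intro x hx
    rw [interior_Ici] at hx
    have hx0 : 0 < x := hx
    have hEnn : 0 ≤ E x := mul_nonneg (erf_nonneg (by positivity)) (Real.exp_nonneg _)
    simp only [Function.iterate_succ, Function.iterate_zero, Function.comp_apply, id_eq]
    rw [hderiv, (hg' x).deriv]
    have h8τ : (0:ℝ) < 8*τ := by linarith
    positivity
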